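/- For a one-layer ReLU network with zero biases, a_k(x) = (∑_j x_j w_{jk})⁺, and similarity y(x,x') = ∑_k a_k(x)a_k(x'), the BiLRP attribution with γ = 0, R_{ii'} = ∑_k [x_i w_{ik} 1_{a_k(x)>0}]·[x'_{i'} w_{i'k} 1_{a_k(x')>0}], equals the Hessian×Product attribution x_i x'_{i'}[∂²y/∂x_i∂x'_{i'}](x,x') wherever y is twice differentiable. -/

import Mathlib

noncomputable def linMap (d : ℕ) (c : Fin d → ℝ) : (Fin d → ℝ) →L[ℝ] ℝ :=
  ∑ j, c j • ContinuousLinearMap.proj j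

lemma linMap_apply (d : ℕ) (c : Fin d → ℝ) (v : Fin d → ℝ) :
    linMap d c v = ∑ j, c j * v j := by
  simp [linMap]

lemma lin_hasFDerivAt (d : ℕ) (c : Fin d → ℝ) (x : Fin d → ℝ) :
    HasFDerivAt (fun z : Fin d → ℝ => ∑ j, z j * c j) (linMap d c) x := by
  have : ∀ j ∈ Finset.univ, HasFDerivAt (fun z : Fin d → ℝ => z j * c j)
      (c j • ContinuousLinearMap.proj j) x := fun j _ =>
    (ContinuousLinearMap.proj j : (Fin d → ℝ) →L[ℝ] ℝ).hasFDerivAt.mul_const (c j)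
  simpa [linMap] using HasFDerivAt.fun_sum this

lemma relu_hasFDerivAt (d : ℕ) (c : Fin d → ℝ) (x : Fin d → ℝ)
    (hne : (∑ j, x j * c j) ≠ 0) :
    HasFDerivAt (fun z : Fin d → ℝ => max (∑ j, z j * c j) 0)
      ((if 0 < ∑ j, x j * c j then (1:ℝ) else 0) • linMap d c) x := by
  have hcont : Continuous fun z : Fin d → ℝ => ∑ j, z j * c j := by fun_prop
  rcases lt_or_gt_of_ne hne with hlt | hgt
  · rw [if_neg (not_lt.mpr hlt.le), zero_smul]
    have hev : ∀ᶠ z in nhds x, (fun z : Fin d → ℝ => max (∑ j, z j * c j) 0) z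
        = (fun _ => (0:ℝ)) z := by
      have : ∀ᶠ z in nhds x, (∑ j, z j * c j) < 0 :=
        (hcont.tendsto x).eventually (eventually_lt_nhds hlt)
      filter_upwards [this] with z hz
      simp [max_eq_right hz.le]
    exact (hasFDerivAt_const (0:ℝ) x).congr_of_eventuallyEq hev
  · rw [if_pos hgt, one_smul]
    have hev : ∀ᶠ z in nhds x, (fun z : Fin d → ℝ => max (∑ j, z j * c j) 0) z
        = (fun z : Fin d → ℝ => ∑ j, z j * c j) z := by
      have : ∀ᶠ z in nhds x, (0:ℝ) < ∑ j, z j * c j :=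
        (hcont.tendsto x).eventually (eventually_gt_nhds hgt)
      filter_upwards [this] with z hz
      simp [max_eq_left hz.le]
    exact (lin_hasFDerivAt d c x).congr_of_eventuallyEq hev

/-- For a one-layer ReLU network with zero biases, the BiLRP
attribution with γ = 0 equals the Hessian×Product attribution wherever y is
twice differentiable (no pre-activation exactly zero). -/
theorem stmt_11 (d h : ℕ) (w : Fin d → Fin h → ℝ)
    (y : (Fin d → ℝ) → (Fin d → ℝ) → ℝ)
    (hy : ∀ x x', y x x'
      = ∑ k, max (∑ j, x j * w j k) 0 * max (∑ j, x' j * w j k) 0)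
    (x x' : Fin d → ℝ)
    (hx : ∀ k, (∑ j, x j * w j k) ≠ 0)
    (hx' : ∀ k, (∑ j, x' j * w j k) ≠ 0)
    (i i' : Fin d) :
    ∑ k, (x i * w i k * (if 0 < ∑ j, x j * w j k then (1:ℝ) else 0)) *
         (x' i' * w i' k * (if 0 < ∑ j, x' j * w j k then (1:ℝ) else 0))
      = x i * x' i' *
        fderiv ℝ (fun z' => fderiv ℝ (fun z => y z z') x (Pi.single i 1)) x'
          (Pi.single i' 1) := by
  set ck : Fin h → ℝ := fun k => if 0 < ∑ j, x j * w j k then (1:ℝ) else 0 with hck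
  set ck' : Fin h → ℝ := fun k => if 0 < ∑ j, x' j * w j k then (1:ℝ) else 0 with hck'
  have hsingle : ∀ (m : Fin d) (c : Fin d → ℝ),
      linMap d c (Pi.single m 1) = c m := by
    intro m c
    rw [linMap_apply]
    rw [Finset.sum_eq_single m]
    · simp
    · intro b _ hb; simp [Pi.single_apply, hb]
    · simp
  -- inner derivative
  have hinner : ∀ z' : Fin d → ℝ,
      fderiv ℝ (fun z => y z z') x (Pi.single i 1)
        = ∑ k, max (∑ j, z' j * w j k) 0 * (ck k * w i k) := by
    intro z'
    have hD : HasFDerivAt (fun z => y z z')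
        (∑ k, max (∑ j, z' j * w j k) 0 • (ck k • linMap d (fun j => w j k))) x := by
      have : ∀ k ∈ Finset.univ, HasFDerivAt
          (fun z : Fin d → ℝ => max (∑ j, z j * w j k) 0 * max (∑ j, z' j * w j k) 0)
          (max (∑ j, z' j * w j k) 0 • (ck k • linMap d (fun j => w j k))) x :=
        fun k _ => (relu_hasFDerivAt d (fun j => w j k) x (hx k)).mul_const _
      have hs := HasFDerivAt.fun_sum this
      refine HasFDerivAt.congr_of_eventuallyEq hs ?_
      filter_upwards with z
      rw [hy]
    rw [hD.fderiv]
    simp only [ContinuousLinearMap.sum_apply, ContinuousLinearMap.smul_apply,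
      smul_eq_mul]
    congr 1
    funext k
    rw [hsingle i]
  -- outer derivative
  have houter : HasFDerivAt
      (fun z' : Fin d → ℝ => ∑ k, max (∑ j, z' j * w j k) 0 * (ck k * w i k))
      (∑ k, (ck k * w i k) • (ck' k • linMap d (fun j => w j k))) x' := by
    refine HasFDerivAt.fun_sum fun k _ => ?_
    exact (relu_hasFDerivAt d (fun j => w j k) x' (hx' k)).mul_const _
  have hfun : (fun z' => fderiv ℝ (fun z => y z z') x (Pi.single i 1))
      = fun z' : Fin d → ℝ => ∑ k, max (∑ j, z' j * w j k) 0 * (ck k * w i k) := by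
    funext z'; exact hinner z'
  rw [hfun, houter.fderiv]
  simp only [ContinuousLinearMap.sum_apply, ContinuousLinearMap.smul_apply,
    smul_eq_mul]
  rw [Finset.mul_sum]
  refine Finset.sum_congr rfl fun k _ => ?_
  rw [hsingle i']
  ring
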